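/- Let n > 0 and k_x ≥ |k_p| be real numbers satisfying n² - k_x² ≥ 1 and the inseparability condition (n² - k_x²)·(n² - k_p²) + 1 < 2·n² - 2·k_x·k_p. Then (n - k_x)·(n + k_p) < 1. -/
import Mathlib


theorem stmt4 (n kx kp : ℝ) (hn : 0 < n) (hk : |kp| ≤ kx)
    (hphys : n ^ 2 - kx ^ 2 ≥ 1)
    (hinsep : (n ^ 2 - kx ^ 2) * (n ^ 2 - kp ^ 2) + 1 < 2 * n ^ 2 - 2 * kx * kp) :
    (n - kx) * (n + kp) < 1 := by
  obtain ⟨h1, h2⟩ := abs_le.mp hk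
  by_contra h
  push_neg at h
  have hB : (1:ℝ) ≤ (n + kx) * (n - kp) := by nlinarith
  nlinarith [mul_nonneg (sub_nonneg.mpr h) (sub_nonneg.mpr hB)]
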